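/- Let (X, 𝔄) be a measurable space, μ a probability measure on X, d ≥ 1, and f : X → ℝ^d a bounded measurable map. For M, K ≥ 1 define the expected reverse-InfoNCE (RevNCE) additional risk J_{M,K} := ∫_{X^{M+K+1}} (1/K) ∑_{k=1}^K − log( ( (1/M) ∑_{m=1}^M exp(⟨f(x), f(x⁺_m)⟩) ) / exp(⟨f(x), f(x⁻_k)⟩) ) dμ^{⊗(M+K+1)}(x, x⁺_1, …, x⁺_M, x⁻_1, …, x⁻_K). Then for every K ≥ 1, lim_{M → ∞} J_{M,K} = ∫_X ∫_X ⟨f(x), f(x')⟩ dμ(x') dμ(x) − ∫_X log( ∫_X exp(⟨f(x), f(x')⟩) dμ(x') ) dμ(x); in particular this limit equals the negative of lim_{K' → ∞} (I_{K'} − log K'), the limit additional risk of InfoNCE. -/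

import Mathlib

open MeasureTheory Filter

section Helpers
variable {α : Type*} [MeasurableSpace α] (ν : Measure α) [IsProbabilityMeasure ν]

lemma bdd_integrable {β : Type*} [MeasurableSpace β] (P : Measure β) [IsFiniteMeasure P]
    {h : β → ℝ} (hm : AEStronglyMeasurable h P) {C : ℝ} (hb : ∀ a, |h a| ≤ C) :
    Integrable h P :=
  (integrable_const C).mono' hm (ae_of_all _ fun a => by simpa [Real.norm_eq_abs] using hb a)

lemma abs_integral_le_of_bound {β : Type*} [MeasurableSpace β] (P : Measure β)
    [IsProbabilityMeasure P] {h : β → ℝ} (hm : AEStronglyMeasurable h P) {C : ℝ}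
    (hb : ∀ a, |h a| ≤ C) : |∫ a, h a ∂P| ≤ C := by
  calc |∫ a, h a ∂P| ≤ ∫ a, |h a| ∂P := by
        simpa [Real.norm_eq_abs] using norm_integral_le_integral_norm (μ := P) h
    _ ≤ ∫ _a, C ∂P := integral_mono (bdd_integrable P hm hb).abs (integrable_const C) hb
    _ = C := by simp

lemma integral_coord {ι : Type*} [Fintype ι] [DecidableEq ι] (h : α → ℝ) (i : ι) :
    ∫ y : ι → α, h (y i) ∂(Measure.pi fun _ : ι => ν) = ∫ a, h a ∂ν := by
  letI : MeasureSpace α := ⟨ν⟩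
  haveI : SigmaFinite (volume : Measure α) := inferInstanceAs (SigmaFinite ν)
  rw [show (Measure.pi fun _ : ι => ν) = (volume : Measure (ι → α)) from rfl]
  calc ∫ y : ι → α, h (y i)
      = ∫ y : ι → α, ∏ j, (if j = i then h (y j) else 1) := by
        refine integral_congr_ae (ae_of_all _ fun y => ?_)
        beta_reduce
        rw [Finset.prod_ite_eq' Finset.univ i fun j => h (y j)]
        simp
    _ = ∏ j, ∫ a, (if j = i then h a else 1) :=
        integral_fintype_prod_eq_prod (E := fun _ => α) (fun j t => if j = i then h t else 1)
    _ = ∫ a, h a := by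
        rw [Finset.prod_congr rfl (g := fun j => if j = i then ∫ a, h a else 1)
          (fun j _ => by by_cases hj : j = i <;> simp [hj]),
          Finset.prod_ite_eq' Finset.univ i fun _ => ∫ a, h a]
        simp

lemma integral_coord_mul {ι : Type*} [Fintype ι] [DecidableEq ι] {h : α → ℝ} {i j : ι}
    (hij : i ≠ j) (h0 : ∫ a, h a ∂ν = 0) :
    ∫ y : ι → α, h (y i) * h (y j) ∂(Measure.pi fun _ : ι => ν) = 0 := by
  letI : MeasureSpace α := ⟨ν⟩
  haveI : SigmaFinite (volume : Measure α) := inferInstanceAs (SigmaFinite ν)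
  rw [show (Measure.pi fun _ : ι => ν) = (volume : Measure (ι → α)) from rfl]
  calc ∫ y : ι → α, h (y i) * h (y j)
      = ∫ y : ι → α, ∏ l, ((if l = i then h (y l) else 1) * (if l = j then h (y l) else 1)) := by
        refine integral_congr_ae (ae_of_all _ fun y => ?_)
        beta_reduce
        rw [Finset.prod_mul_distrib, Finset.prod_ite_eq' Finset.univ i fun l => h (y l),
          Finset.prod_ite_eq' Finset.univ j fun l => h (y l)]
        simp
    _ = ∏ l, ∫ a, ((if l = i then h a else 1) * (if l = j then h a else 1)) :=
        integral_fintype_prod_eq_prod (E := fun _ => α)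
          (fun l t => (if l = i then h t else 1) * (if l = j then h t else 1))
    _ = 0 := by
        refine Finset.prod_eq_zero (Finset.mem_univ i) ?_
        simp only [if_pos rfl, if_neg hij, mul_one]
        exact h0

lemma integral_sq_avg_le {M : ℕ} (hM : 1 ≤ M) {h : α → ℝ} (hm : Measurable h)
    {C : ℝ} (hC : 0 ≤ C) (hb : ∀ a, |h a| ≤ C) (h0 : ∫ a, h a ∂ν = 0) :
    ∫ y : Fin M → α, ((1 / (M : ℝ)) * ∑ l, h (y l)) ^ 2 ∂(Measure.pi fun _ : Fin M => ν)
      ≤ C ^ 2 / M := by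
  set π : Measure (Fin M → α) := Measure.pi fun _ : Fin M => ν with hπ
  have hMpos : (0 : ℝ) < M := by exact_mod_cast hM
  have hmul_int : ∀ i j : Fin M, Integrable (fun y : Fin M → α => h (y i) * h (y j)) π := by
    intro i j
    refine bdd_integrable π (Measurable.aestronglyMeasurable ?_) (C := C * C) ?_
    · exact (hm.comp (measurable_pi_apply i)).mul (hm.comp (measurable_pi_apply j))
    · intro y
      rw [abs_mul]
      exact mul_le_mul (hb _) (hb _) (abs_nonneg _) hC
  have key : ∀ y : Fin M → α, ((1 / (M : ℝ)) * ∑ l, h (y l)) ^ 2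
      = (1 / (M : ℝ) ^ 2) * ∑ i, ∑ j, h (y i) * h (y j) := by
    intro y
    rw [mul_pow, div_pow, one_pow]
    congr 1
    rw [sq, Finset.sum_mul_sum]
  calc ∫ y, ((1 / (M : ℝ)) * ∑ l, h (y l)) ^ 2 ∂π
      = (1 / (M : ℝ) ^ 2) * ∑ i, ∑ j, ∫ y, h (y i) * h (y j) ∂π := by
        simp_rw [key]
        rw [integral_const_mul]
        congr 1
        rw [integral_finset_sum _ fun i _ => integrable_finset_sum _ fun j _ => hmul_int i j]
        exact Finset.sum_congr rfl fun i _ => integral_finset_sum _ fun j _ => hmul_int i j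
    _ ≤ (1 / (M : ℝ) ^ 2) * ∑ i : Fin M, ∑ j : Fin M, (if i = j then C ^ 2 else 0) := by
        refine mul_le_mul_of_nonneg_left ?_ (by positivity)
        refine Finset.sum_le_sum fun i _ => Finset.sum_le_sum fun j _ => ?_
        by_cases hij : i = j
        · subst hij
          rw [if_pos rfl]
          have : ∫ y, h (y i) * h (y i) ∂π = ∫ a, h a * h a ∂ν :=
            integral_coord ν (fun a => h a * h a) i
          rw [this]
          calc ∫ a, h a * h a ∂ν ≤ ∫ _a, C ^ 2 ∂ν := by
                refine integral_mono ?_ (integrable_const _) fun a => ?_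
                · refine bdd_integrable ν (hm.mul hm).aestronglyMeasurable (C := C * C) fun a => ?_
                  rw [abs_mul]; exact mul_le_mul (hb _) (hb _) (abs_nonneg _) hC
                · calc h a * h a ≤ |h a * h a| := le_abs_self _
                    _ = |h a| * |h a| := abs_mul _ _
                    _ ≤ C * C := mul_le_mul (hb _) (hb _) (abs_nonneg _) hC
                    _ = C ^ 2 := (sq C).symm
            _ = C ^ 2 := by simp
        · rw [if_neg hij, integral_coord_mul ν hij h0]
    _ = (1 / (M : ℝ) ^ 2) * (M * C ^ 2) := by
        congr 1
        rw [Finset.sum_congr rfl fun i _ => Finset.sum_ite_eq Finset.univ i fun _ => C ^ 2]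
        simp [Finset.sum_const, Finset.card_univ]
    _ = C ^ 2 / M := by field_simp

lemma integral_abs_avg_le {M : ℕ} (hM : 1 ≤ M) {h : α → ℝ} (hm : Measurable h)
    {C : ℝ} (hC : 0 ≤ C) (hb : ∀ a, |h a| ≤ C) (h0 : ∫ a, h a ∂ν = 0) :
    ∫ y : Fin M → α, |(1 / (M : ℝ)) * ∑ l, h (y l)| ∂(Measure.pi fun _ : Fin M => ν)
      ≤ C / Real.sqrt M := by
  set π : Measure (Fin M → α) := Measure.pi fun _ : Fin M => ν with hπ
  have hMpos : (0 : ℝ) < M := by exact_mod_cast hM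
  have hsq : (0 : ℝ) < Real.sqrt M := Real.sqrt_pos.mpr hMpos
  have hZm : Measurable fun y : Fin M → α => (1 / (M : ℝ)) * ∑ l, h (y l) :=
    (Finset.measurable_sum _ fun l _ => hm.comp (measurable_pi_apply l)).const_mul _
  have hZb : ∀ y : Fin M → α, |(1 / (M : ℝ)) * ∑ l, h (y l)| ≤ C := by
    intro y
    rw [abs_mul, abs_of_nonneg (by positivity : (0:ℝ) ≤ 1 / (M:ℝ))]
    calc (1 / (M : ℝ)) * |∑ l, h (y l)| ≤ (1 / (M : ℝ)) * ∑ l, |h (y l)| :=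
          mul_le_mul_of_nonneg_left (Finset.abs_sum_le_sum_abs _ _) (by positivity)
      _ ≤ (1 / (M : ℝ)) * ∑ _l : Fin M, C :=
          mul_le_mul_of_nonneg_left (Finset.sum_le_sum fun l _ => hb _) (by positivity)
      _ = C := by
          rw [Finset.sum_const, Finset.card_univ, Fintype.card_fin, nsmul_eq_mul]
          field_simp
  rcases eq_or_lt_of_le hC with hC0 | hCpos
  · have hz : ∀ a, h a = 0 := fun a => abs_nonpos_iff.mp ((hb a).trans hC0.ge)
    simp only [hz, Finset.sum_const_zero, mul_zero, abs_zero, integral_zero]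
    positivity
  · set c : ℝ := C / Real.sqrt M with hc
    have hcpos : 0 < c := div_pos hCpos hsq
    have hpt : ∀ y : Fin M → α, |(1 / (M : ℝ)) * ∑ l, h (y l)|
        ≤ ((1 / (M : ℝ)) * ∑ l, h (y l)) ^ 2 / (2 * c) + c / 2 := by
      intro y
      set Z := (1 / (M : ℝ)) * ∑ l, h (y l) with hZ
      have h1 : |Z| * (2 * c) ≤ Z ^ 2 + c ^ 2 := by
        nlinarith [sq_nonneg (|Z| - c), sq_abs Z]
      have h2 : |Z| ≤ (Z ^ 2 + c ^ 2) / (2 * c) := (le_div_iff₀ (by linarith)).mpr h1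
      calc |Z| ≤ (Z ^ 2 + c ^ 2) / (2 * c) := h2
        _ = Z ^ 2 / (2 * c) + c / 2 := by field_simp
    have hint1 : Integrable (fun y : Fin M → α => |(1 / (M : ℝ)) * ∑ l, h (y l)|) π :=
      (bdd_integrable π hZm.aestronglyMeasurable hZb).abs
    have hintsq : Integrable (fun y : Fin M → α => ((1 / (M : ℝ)) * ∑ l, h (y l)) ^ 2) π := by
      refine bdd_integrable π ((hZm.pow_const 2).aestronglyMeasurable) (C := C ^ 2) fun y => ?_
      rw [abs_pow, sq_abs]
      calc ((1 / (M : ℝ)) * ∑ l, h (y l)) ^ 2 = |(1 / (M : ℝ)) * ∑ l, h (y l)| ^ 2 :=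
            (sq_abs _).symm
        _ ≤ C ^ 2 := pow_le_pow_left₀ (abs_nonneg _) (hZb y) 2
    have hint2 : Integrable (fun y : Fin M → α =>
        ((1 / (M : ℝ)) * ∑ l, h (y l)) ^ 2 / (2 * c) + c / 2) π :=
      (hintsq.div_const _).add (integrable_const _)
    calc ∫ y, |(1 / (M : ℝ)) * ∑ l, h (y l)| ∂π
        ≤ ∫ y, (((1 / (M : ℝ)) * ∑ l, h (y l)) ^ 2 / (2 * c) + c / 2) ∂π :=
          integral_mono hint1 hint2 hpt
      _ = (∫ y, ((1 / (M : ℝ)) * ∑ l, h (y l)) ^ 2 ∂π) / (2 * c) + c / 2 := by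
          rw [integral_add (hintsq.div_const _) (integrable_const _), integral_div, integral_const]
          simp
      _ ≤ (C ^ 2 / M) / (2 * c) + c / 2 := by
          gcongr
          exact integral_sq_avg_le ν hM hm hC hb h0
      _ = C / Real.sqrt M := by
          rw [hc]
          field_simp
          linear_combination (Real.sq_sqrt hMpos.le)

lemma abs_log_sub_log_le {ε a b : ℝ} (hε : 0 < ε) (ha : ε ≤ a) (hb : ε ≤ b) :
    |Real.log a - Real.log b| ≤ |a - b| / ε := by
  have key : ∀ u v : ℝ, ε ≤ u → ε ≤ v → Real.log u - Real.log v ≤ |u - v| / ε := by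
    intro u v hu hv
    have hv0 : 0 < v := hε.trans_le hv
    have hu0 : 0 < u := hε.trans_le hu
    rw [← Real.log_div hu0.ne' hv0.ne']
    have h2 : Real.log (u / v) ≤ u / v - 1 := Real.log_le_sub_one_of_pos (div_pos hu0 hv0)
    have h3 : u / v - 1 = (u - v) / v := by field_simp
    have h4 : (u - v) / v ≤ |u - v| / ε := div_le_div₀ (abs_nonneg _) (le_abs_self _) hε hv
    linarith
  rw [abs_sub_le_iff]
  exact ⟨key a b ha hb, by rw [abs_sub_comm]; exact key b a hb ha⟩

lemma core_bound {g : α → ℝ} (hg : Measurable g) {ε C : ℝ} (hε : 0 < ε)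
    (hlo : ∀ a, ε ≤ g a) (hhi : ∀ a, g a ≤ C) {s : ℝ} (hs0 : 0 ≤ s) (hsC : s ≤ C)
    {M : ℕ} (hM : 1 ≤ M) :
    |(∫ y : Fin M → α, Real.log (s / M + (1 / (M : ℝ)) * ∑ l, g (y l))
        ∂(Measure.pi fun _ : Fin M => ν)) - Real.log (∫ a, g a ∂ν)|
      ≤ 2 * (C / ε) / Real.sqrt M := by
  set π : Measure (Fin M → α) := Measure.pi fun _ : Fin M => ν with hπ
  have hMpos : (0 : ℝ) < M := by exact_mod_cast hM
  have hsqpos : (0 : ℝ) < Real.sqrt M := Real.sqrt_pos.mpr hMpos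
  obtain ⟨a0⟩ : Nonempty α := by
    by_contra hne
    rw [not_nonempty_iff] at hne
    have : ν Set.univ = 0 := by
      rw [Set.univ_eq_empty_iff.mpr hne]
      exact measure_empty
    rw [measure_univ] at this
    exact one_ne_zero this
  have hεC : ε ≤ C := (hlo a0).trans (hhi a0)
  have hC0 : 0 < C := hε.trans_le hεC
  have hgabs : ∀ a, |g a| ≤ C := fun a =>
    abs_le.mpr ⟨by linarith [hlo a], hhi a⟩
  have hgint : Integrable g ν := bdd_integrable ν hg.aestronglyMeasurable hgabs
  set m : ℝ := ∫ a, g a ∂ν with hmdef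
  have hmlo : ε ≤ m := by
    have := integral_mono (integrable_const ε) hgint hlo
    simpa using this
  have hmhi : m ≤ C := by
    have := integral_mono hgint (integrable_const C) hhi
    simpa using this
  set h : α → ℝ := fun a => g a - m with hh
  have hhm : Measurable h := hg.sub measurable_const
  have hhabs : ∀ a, |h a| ≤ C := fun a =>
    abs_le.mpr ⟨by simp only [hh]; linarith [hlo a], by simp only [hh]; linarith [hhi a, hε]⟩
  have hh0 : ∫ a, h a ∂ν = 0 := by
    rw [hh, integral_sub hgint (integrable_const m)]
    simp [hmdef]
  have hid : ∀ y : Fin M → α, (1 / (M : ℝ)) * ∑ l, h (y l)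
      = ((1 / (M : ℝ)) * ∑ l, g (y l)) - m := by
    intro y
    simp only [hh]
    rw [Finset.sum_sub_distrib, Finset.sum_const, Finset.card_univ, Fintype.card_fin,
      nsmul_eq_mul, mul_sub]
    congr 1
    field_simp
  have havglo : ∀ y : Fin M → α, ε ≤ (1 / (M : ℝ)) * ∑ l, g (y l) := by
    intro y
    calc ε = (1 / (M : ℝ)) * ∑ _l : Fin M, ε := by
          rw [Finset.sum_const, Finset.card_univ, Fintype.card_fin, nsmul_eq_mul]
          field_simp
      _ ≤ (1 / (M : ℝ)) * ∑ l, g (y l) :=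
          mul_le_mul_of_nonneg_left (Finset.sum_le_sum fun l _ => hlo _) (by positivity)
  have havghi : ∀ y : Fin M → α, (1 / (M : ℝ)) * ∑ l, g (y l) ≤ C := by
    intro y
    calc (1 / (M : ℝ)) * ∑ l, g (y l) ≤ (1 / (M : ℝ)) * ∑ _l : Fin M, C :=
          mul_le_mul_of_nonneg_left (Finset.sum_le_sum fun l _ => hhi _) (by positivity)
      _ = C := by
          rw [Finset.sum_const, Finset.card_univ, Fintype.card_fin, nsmul_eq_mul]
          field_simp
  have harglo : ∀ y : Fin M → α, ε ≤ s / M + (1 / (M : ℝ)) * ∑ l, g (y l) := fun y => by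
    have := havglo y
    have hsM : 0 ≤ s / (M : ℝ) := by positivity
    linarith
  -- pointwise bound
  have hpt : ∀ y : Fin M → α,
      |Real.log (s / M + (1 / (M : ℝ)) * ∑ l, g (y l)) - Real.log m|
        ≤ (C / M) / ε + |(1 / (M : ℝ)) * ∑ l, h (y l)| / ε := by
    intro y
    calc |Real.log (s / M + (1 / (M : ℝ)) * ∑ l, g (y l)) - Real.log m|
        ≤ |s / M + (1 / (M : ℝ)) * ∑ l, g (y l) - m| / ε :=
          abs_log_sub_log_le hε (harglo y) hmlo
      _ ≤ (s / M + |(1 / (M : ℝ)) * ∑ l, g (y l) - m|) / ε := by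
          gcongr
          calc |s / M + (1 / (M : ℝ)) * ∑ l, g (y l) - m|
              = |s / M + ((1 / (M : ℝ)) * ∑ l, g (y l) - m)| := by ring_nf
            _ ≤ |s / (M : ℝ)| + |(1 / (M : ℝ)) * ∑ l, g (y l) - m| := abs_add_le _ _
            _ = s / M + |(1 / (M : ℝ)) * ∑ l, g (y l) - m| := by
                rw [abs_of_nonneg (by positivity : (0:ℝ) ≤ s / (M:ℝ))]
      _ ≤ (C / M + |(1 / (M : ℝ)) * ∑ l, g (y l) - m|) / ε := by
          gcongr
      _ = (C / M) / ε + |(1 / (M : ℝ)) * ∑ l, h (y l)| / ε := by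
          rw [hid y, add_div]
  -- measurability and integrability
  have hLm : Measurable fun y : Fin M → α =>
      Real.log (s / M + (1 / (M : ℝ)) * ∑ l, g (y l)) :=
    Real.measurable_log.comp (measurable_const.add
      ((Finset.measurable_sum _ fun l _ => hg.comp (measurable_pi_apply l)).const_mul _))
  have hLb : ∀ y : Fin M → α,
      |Real.log (s / M + (1 / (M : ℝ)) * ∑ l, g (y l)) - Real.log m| ≤ 2 * C / ε := by
    intro y
    calc |Real.log (s / M + (1 / (M : ℝ)) * ∑ l, g (y l)) - Real.log m|
        ≤ (C / M) / ε + |(1 / (M : ℝ)) * ∑ l, h (y l)| / ε := hpt y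
      _ ≤ C / ε + C / ε := by
          have hZC : |(1 / (M : ℝ)) * ∑ l, h (y l)| ≤ C := by
            rw [hid y]
            have h1 := havglo y
            have h2 := havghi y
            rw [abs_le]
            constructor <;> linarith
          have hM1 : (1 : ℝ) ≤ (M : ℝ) := by exact_mod_cast hM
          have hCM : C / (M : ℝ) ≤ C := by
            rw [div_le_iff₀ hMpos]
            nlinarith
          gcongr
      _ ≤ 2 * C / ε := le_of_eq (by ring)
  have hLint : Integrable (fun y : Fin M → α =>
      Real.log (s / M + (1 / (M : ℝ)) * ∑ l, g (y l))) π := by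
    refine bdd_integrable π hLm.aestronglyMeasurable (C := |Real.log m| + 2 * C / ε) fun y => ?_
    have := hLb y
    have := abs_sub_abs_le_abs_sub (Real.log (s / M + (1 / (M : ℝ)) * ∑ l, g (y l))) (Real.log m)
    linarith
  have habsint : Integrable (fun y : Fin M → α => |(1 / (M : ℝ)) * ∑ l, h (y l)|) π := by
    refine Integrable.abs ?_
    refine bdd_integrable π ?_ (C := C) ?_
    · exact ((Finset.measurable_sum _ fun l _ => hhm.comp (measurable_pi_apply l)).const_mul
        _).aestronglyMeasurable
    · intro y
      rw [hid y]
      have h1 := havglo y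
      have h2 := havghi y
      rw [abs_le]
      constructor <;> [linarith; linarith]
  -- main chain
  have hmain : |∫ y, Real.log (s / M + (1 / (M : ℝ)) * ∑ l, g (y l)) ∂π - Real.log m|
      ≤ (C / M) / ε + (C / Real.sqrt M) / ε := by
    have heq : ∫ y, Real.log (s / M + (1 / (M : ℝ)) * ∑ l, g (y l)) ∂π - Real.log m
        = ∫ y, (Real.log (s / M + (1 / (M : ℝ)) * ∑ l, g (y l)) - Real.log m) ∂π := by
      rw [integral_sub hLint (integrable_const _), integral_const]
      simp
    rw [heq]
    calc |∫ y, (Real.log (s / M + (1 / (M : ℝ)) * ∑ l, g (y l)) - Real.log m) ∂π|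
        ≤ ∫ y, |Real.log (s / M + (1 / (M : ℝ)) * ∑ l, g (y l)) - Real.log m| ∂π := by
          simpa [Real.norm_eq_abs] using norm_integral_le_integral_norm (μ := π)
            (fun y => Real.log (s / M + (1 / (M : ℝ)) * ∑ l, g (y l)) - Real.log m)
      _ ≤ ∫ y, ((C / M) / ε + |(1 / (M : ℝ)) * ∑ l, h (y l)| / ε) ∂π := by
          refine integral_mono (hLint.sub (integrable_const _)).abs ?_ hpt
          exact (integrable_const _).add (habsint.div_const _)
      _ = (C / M) / ε + (∫ y, |(1 / (M : ℝ)) * ∑ l, h (y l)| ∂π) / ε := by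
          rw [integral_add (integrable_const _) (habsint.div_const _), integral_const,
            integral_div]
          simp
      _ ≤ (C / M) / ε + (C / Real.sqrt M) / ε := by
          gcongr
          exact integral_abs_avg_le ν hM hhm hC0.le hhabs hh0
  refine hmain.trans ?_
  have hM1 : (1 : ℝ) ≤ (M : ℝ) := by exact_mod_cast hM
  have hsqle : Real.sqrt M ≤ M := by
    calc Real.sqrt M ≤ Real.sqrt ((M : ℝ) ^ 2) := by
          apply Real.sqrt_le_sqrt
          nlinarith [hM1]
      _ = M := Real.sqrt_sq hMpos.le
  have h1 : C / (M : ℝ) ≤ C / Real.sqrt M := by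
    rw [div_le_div_iff₀ hMpos hsqpos]
    nlinarith [mul_le_mul_of_nonneg_left hsqle hC0.le]
  calc (C / M) / ε + (C / Real.sqrt M) / ε ≤ (C / Real.sqrt M) / ε + (C / Real.sqrt M) / ε :=
        add_le_add ((div_le_div_iff_of_pos_right hε).mpr h1) le_rfl
    _ = 2 * (C / ε) / Real.sqrt M := by ring
  
lemma le_avg_of_le {n : ℕ} (hn : 1 ≤ n) {g : Fin n → ℝ} {lo : ℝ} (hlo : ∀ i, lo ≤ g i) :
    lo ≤ (1 / (n : ℝ)) * ∑ i, g i := by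
  have hnpos : (0 : ℝ) < n := by exact_mod_cast hn
  calc lo = (1 / (n : ℝ)) * ∑ _i : Fin n, lo := by
        rw [Finset.sum_const, Finset.card_univ, Fintype.card_fin, nsmul_eq_mul]
        field_simp
    _ ≤ (1 / (n : ℝ)) * ∑ i, g i :=
        mul_le_mul_of_nonneg_left (Finset.sum_le_sum fun i _ => hlo _) (by positivity)

lemma avg_le_of_le {n : ℕ} (hn : 1 ≤ n) {g : Fin n → ℝ} {hi : ℝ} (hhi : ∀ i, g i ≤ hi) :
    (1 / (n : ℝ)) * ∑ i, g i ≤ hi := by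
  have hnpos : (0 : ℝ) < n := by exact_mod_cast hn
  calc (1 / (n : ℝ)) * ∑ i, g i ≤ (1 / (n : ℝ)) * ∑ _i : Fin n, hi :=
        mul_le_mul_of_nonneg_left (Finset.sum_le_sum fun i _ => hhi _) (by positivity)
    _ = hi := by
        rw [Finset.sum_const, Finset.card_univ, Fintype.card_fin, nsmul_eq_mul]
        field_simp

lemma abs_avg_le {n : ℕ} (hn : 1 ≤ n) {g : Fin n → ℝ} {b : ℝ} (hb : ∀ i, |g i| ≤ b) :
    |(1 / (n : ℝ)) * ∑ i, g i| ≤ b := by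
  rw [abs_le]
  constructor
  · exact le_avg_of_le hn fun i => neg_abs_le (g i) |>.trans' (neg_le_neg (hb i))
  · exact avg_le_of_le hn fun i => le_of_abs_le (hb i)

end Helpers

/-- Theorem 3 (RevNCE): the additional risk of the reverse InfoNCE loss with M
positives and K negatives (all i.i.d. from μ) converges, as M → ∞, to
∫∫⟨f(x),f(x')⟩ dμdμ − ∫ log ∫ e^{⟨f(x),f(x')⟩} dμ dμ, which is the negative of the
limit additional risk of InfoNCE, lim_{K'→∞} (I_{K'} − log K'). -/
theorem revNCE_additional_risk_limit
    {X : Type*} [MeasurableSpace X] (μ : Measure X) [IsProbabilityMeasure μ]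
    (d : ℕ) (hd : 1 ≤ d)
    (f : X → EuclideanSpace ℝ (Fin d)) (hf : Measurable f)
    (B : ℝ) (hB : ∀ x, ‖f x‖ ≤ B)
    (J : ℕ → ℕ → ℝ)
    (hJ : ∀ M K : ℕ, J M K =
      ∫ p : X × (Fin M → X) × (Fin K → X),
        (1 / (K : ℝ)) * ∑ k,
          -Real.log (((1 / (M : ℝ)) * ∑ m, Real.exp ((inner ℝ (f p.1) (f (p.2.1 m)) : ℝ)))
            / Real.exp ((inner ℝ (f p.1) (f (p.2.2 k)) : ℝ)))
        ∂(μ.prod ((Measure.pi fun _ : Fin M => μ).prod (Measure.pi fun _ : Fin K => μ))))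
    (I : ℕ → ℝ)
    (hI : ∀ K : ℕ, I K =
      ∫ p : X × X × (Fin K → X),
        -Real.log (Real.exp ((inner ℝ (f p.1) (f p.2.1) : ℝ)) /
          (Real.exp ((inner ℝ (f p.1) (f p.2.1) : ℝ))
            + ∑ k, Real.exp ((inner ℝ (f p.1) (f (p.2.2 k)) : ℝ))))
        ∂(μ.prod (μ.prod (Measure.pi fun _ : Fin K => μ)))) :
    (∀ K : ℕ, 1 ≤ K →
      Tendsto (fun M : ℕ => J M K) atTop
        (nhds ((∫ x, ∫ x', (inner ℝ (f x) (f x') : ℝ) ∂μ ∂μ)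
          - ∫ x, Real.log (∫ x', Real.exp ((inner ℝ (f x) (f x') : ℝ)) ∂μ) ∂μ))) ∧
    Tendsto (fun K : ℕ => I K - Real.log (K : ℝ)) atTop
      (nhds (-((∫ x, ∫ x', (inner ℝ (f x) (f x') : ℝ) ∂μ ∂μ)
          - ∫ x, Real.log (∫ x', Real.exp ((inner ℝ (f x) (f x') : ℝ)) ∂μ) ∂μ))) := by
  classical
  obtain ⟨x0⟩ : Nonempty X := by
    by_contra hne
    rw [not_nonempty_iff] at hne
    have h1 : μ Set.univ = 0 := by
      rw [Set.univ_eq_empty_iff.mpr hne]; exact measure_empty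
    rw [measure_univ] at h1
    exact one_ne_zero h1
  have hB0 : 0 ≤ B := le_trans (norm_nonneg _) (hB x0)
  set T1 : ℝ := ∫ x, ∫ x', (inner ℝ (f x) (f x') : ℝ) ∂μ ∂μ with hT1def
  set mfun : X → ℝ := fun x => ∫ x', Real.exp ((inner ℝ (f x) (f x') : ℝ)) ∂μ with hmfundef
  set T2 : ℝ := ∫ x, Real.log (mfun x) ∂μ with hT2def
  set ε : ℝ := Real.exp (-(B * B)) with hεdef
  set C : ℝ := Real.exp (B * B) with hCdef
  have hεpos : 0 < ε := Real.exp_pos _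
  have hCpos : 0 < C := Real.exp_pos _
  have hip : ∀ x y : X, |(inner ℝ (f x) (f y) : ℝ)| ≤ B * B := fun x y =>
    (abs_real_inner_le_norm _ _).trans
      (mul_le_mul (hB x) (hB y) (norm_nonneg _) hB0)
  have hglo : ∀ x y : X, ε ≤ Real.exp ((inner ℝ (f x) (f y) : ℝ)) := fun x y =>
    Real.exp_le_exp.mpr (neg_le_of_abs_le (hip x y))
  have hghi : ∀ x y : X, Real.exp ((inner ℝ (f x) (f y) : ℝ)) ≤ C := fun x y =>
    Real.exp_le_exp.mpr (le_of_abs_le (hip x y))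
  have hinner2 : Measurable fun q : X × X => (inner ℝ (f q.1) (f q.2) : ℝ) :=
    (hf.comp measurable_fst).inner (hf.comp measurable_snd)
  have hg2 : Measurable fun q : X × X => Real.exp ((inner ℝ (f q.1) (f q.2) : ℝ)) :=
    Real.measurable_exp.comp hinner2
  have hmmeas : Measurable mfun :=
    (hg2.stronglyMeasurable.integral_prod_right').measurable
  have hgx : ∀ x : X, Measurable fun t : X => Real.exp ((inner ℝ (f x) (f t) : ℝ)) := fun x =>
    Real.measurable_exp.comp (measurable_const.inner hf)
  have hmlo : ∀ x, ε ≤ mfun x := by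
    intro x
    have h1 : Integrable (fun t => Real.exp ((inner ℝ (f x) (f t) : ℝ))) μ := by
      refine bdd_integrable μ (hgx x).aestronglyMeasurable (C := C) fun t => ?_
      rw [abs_of_pos (Real.exp_pos _)]; exact hghi x t
    have := integral_mono (integrable_const ε) h1 (hglo x)
    simpa using this
  have hmhi : ∀ x, mfun x ≤ C := by
    intro x
    have h1 : Integrable (fun t => Real.exp ((inner ℝ (f x) (f t) : ℝ))) μ := by
      refine bdd_integrable μ (hgx x).aestronglyMeasurable (C := C) fun t => ?_
      rw [abs_of_pos (Real.exp_pos _)]; exact hghi x t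
    have := integral_mono h1 (integrable_const C) (hghi x)
    simpa using this
  have hlogm : ∀ x, |Real.log (mfun x)| ≤ B * B := by
    intro x
    rw [abs_le]
    constructor
    · calc -(B * B) = Real.log ε := (Real.log_exp _).symm
        _ ≤ Real.log (mfun x) := Real.log_le_log hεpos (hmlo x)
    · calc Real.log (mfun x) ≤ Real.log C := Real.log_le_log (hεpos.trans_le (hmlo x)) (hmhi x)
        _ = B * B := Real.log_exp _
  have hcore : ∀ (x : X) (s : ℝ), 0 ≤ s → s ≤ C → ∀ (n : ℕ), 1 ≤ n →
      |(∫ y : Fin n → X, Real.log (s / n + (1 / (n : ℝ)) *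
          ∑ l, Real.exp ((inner ℝ (f x) (f (y l)) : ℝ))) ∂(Measure.pi fun _ : Fin n => μ))
        - Real.log (mfun x)| ≤ 2 * (C / ε) / Real.sqrt n := by
    intro x s hs0 hsC n hn
    exact core_bound μ (hgx x) hεpos (hglo x) (hghi x) hs0 hsC hn
  constructor
  · -- Part 1 : RevNCE limit
    intro K hK
    have hKne : (K : ℝ) ≠ 0 := Nat.cast_ne_zero.mpr (by omega)
    have hmain : ∀ M : ℕ, 1 ≤ M → |J M K - (T1 - T2)| ≤ 2 * (C / ε) / Real.sqrt M := by
      intro M hM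
      have hMne : (M : ℝ) ≠ 0 := Nat.cast_ne_zero.mpr (by omega)
      set πM : Measure (Fin M → X) := Measure.pi fun _ : Fin M => μ with hπM
      set πK : Measure (Fin K → X) := Measure.pi fun _ : Fin K => μ with hπK
      set P : Measure (X × (Fin M → X) × (Fin K → X)) := μ.prod (πM.prod πK) with hP
      set A : X × (Fin M → X) × (Fin K → X) → ℝ :=
        fun p => (1 / (K : ℝ)) * ∑ k, (inner ℝ (f p.1) (f (p.2.2 k)) : ℝ) with hA
      set L : X × (Fin M → X) × (Fin K → X) → ℝ :=
        fun p => Real.log ((1 / (M : ℝ)) * ∑ m, Real.exp ((inner ℝ (f p.1) (f (p.2.1 m)) : ℝ)))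
        with hL
      have havg : ∀ (x : X) (y : Fin M → X),
          ε ≤ (1 / (M : ℝ)) * ∑ m, Real.exp ((inner ℝ (f x) (f (y m)) : ℝ)) ∧
          (1 / (M : ℝ)) * ∑ m, Real.exp ((inner ℝ (f x) (f (y m)) : ℝ)) ≤ C := fun x y =>
        ⟨le_avg_of_le hM fun m => hglo x (y m), avg_le_of_le hM fun m => hghi x (y m)⟩
      have hlogavg : ∀ (x : X) (y : Fin M → X),
          |Real.log ((1 / (M : ℝ)) * ∑ m, Real.exp ((inner ℝ (f x) (f (y m)) : ℝ)))| ≤ B * B := by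
        intro x y
        rw [abs_le]
        constructor
        · calc -(B * B) = Real.log ε := (Real.log_exp _).symm
            _ ≤ _ := Real.log_le_log hεpos (havg x y).1
        · calc Real.log _ ≤ Real.log C :=
              Real.log_le_log (hεpos.trans_le (havg x y).1) (havg x y).2
            _ = B * B := Real.log_exp _
      have hAb : ∀ p, |A p| ≤ B * B := fun p => abs_avg_le hK fun k => hip p.1 (p.2.2 k)
      have hLb : ∀ p, |L p| ≤ B * B := fun p => hlogavg p.1 p.2.1
      have hAmeas : Measurable A :=
        (Finset.measurable_sum Finset.univ fun k _ =>
          (hf.comp measurable_fst).inner (hf.comp ((measurable_pi_apply k).comp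
            (measurable_snd.comp measurable_snd)))).const_mul _
      have hLmeas : Measurable L :=
        Real.measurable_log.comp ((Finset.measurable_sum Finset.univ fun m _ =>
          Real.measurable_exp.comp ((hf.comp measurable_fst).inner
            (hf.comp ((measurable_pi_apply m).comp
              (measurable_fst.comp measurable_snd))))).const_mul _)
      have hAint : Integrable A P := bdd_integrable P hAmeas.aestronglyMeasurable hAb
      have hLint : Integrable L P := bdd_integrable P hLmeas.aestronglyMeasurable hLb
      -- Step 1 : rewrite J M K
      have hJeq : J M K = (∫ p, A p ∂P) - ∫ p, L p ∂P := by
        rw [hJ M K, ← integral_sub hAint hLint]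
        refine integral_congr_ae (ae_of_all _ fun p => ?_)
        beta_reduce
        have havgpos : 0 < (1 / (M : ℝ)) * ∑ m, Real.exp ((inner ℝ (f p.1) (f (p.2.1 m)) : ℝ)) :=
          hεpos.trans_le (havg p.1 p.2.1).1
        simp only [Real.log_div havgpos.ne' (Real.exp_ne_zero _), Real.log_exp, neg_sub]
        rw [Finset.sum_sub_distrib, Finset.sum_const, Finset.card_univ, Fintype.card_fin,
          nsmul_eq_mul, mul_sub, hA, hL]
        congr 1
        rw [← mul_assoc]
        field_simp
      -- Step 2 : ∫ A = T1
      have hAval : (∫ p, A p ∂P) = T1 := by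
        have hφ : Measurable fun p : X × (Fin M → X) × (Fin K → X) => (p.1, p.2.2) :=
          measurable_fst.prodMk (measurable_snd.comp measurable_snd)
        have hmapA : Measure.map (fun p : X × (Fin M → X) × (Fin K → X) => (p.1, p.2.2)) P
            = μ.prod πK := by
          have h1 : (fun p : X × (Fin M → X) × (Fin K → X) => (p.1, p.2.2))
              = Prod.map id (Prod.snd : (Fin M → X) × (Fin K → X) → Fin K → X) := rfl
          rw [hP, h1, ← Measure.map_prod_map _ _ measurable_id measurable_snd, Measure.map_id,
            Measure.map_snd_prod, measure_univ, one_smul]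
        have hαmeas : Measurable fun q : X × (Fin K → X) =>
            (1 / (K : ℝ)) * ∑ k, (inner ℝ (f q.1) (f (q.2 k)) : ℝ) :=
          (Finset.measurable_sum Finset.univ fun k _ =>
            (hf.comp measurable_fst).inner (hf.comp ((measurable_pi_apply k).comp
              measurable_snd))).const_mul _
        have hαint : Integrable (fun q : X × (Fin K → X) =>
            (1 / (K : ℝ)) * ∑ k, (inner ℝ (f q.1) (f (q.2 k)) : ℝ)) (μ.prod πK) :=
          bdd_integrable _ hαmeas.aestronglyMeasurable
            (C := B * B) (fun q => abs_avg_le hK fun k => hip q.1 (q.2 k))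
        have h2 : (∫ p, A p ∂P) = ∫ q : X × (Fin K → X),
            (1 / (K : ℝ)) * ∑ k, (inner ℝ (f q.1) (f (q.2 k)) : ℝ) ∂(μ.prod πK) := by
          rw [← hmapA, integral_map hφ.aemeasurable hαmeas.aestronglyMeasurable]
        rw [h2, integral_prod _ hαint, hT1def]
        refine integral_congr_ae (ae_of_all _ fun x => ?_)
        beta_reduce
        have hik : ∀ k : Fin K,
            Integrable (fun z : Fin K → X => (inner ℝ (f x) (f (z k)) : ℝ)) πK := by
          intro k
          refine bdd_integrable _ ?_ (C := B * B) (fun z => hip x (z k))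
          exact ((measurable_const.inner hf).comp (measurable_pi_apply k)).aestronglyMeasurable
        rw [integral_const_mul, integral_finset_sum _ fun k _ => hik k,
          Finset.sum_congr rfl fun k _ =>
            integral_coord μ (fun t => (inner ℝ (f x) (f t) : ℝ)) k,
          Finset.sum_const, Finset.card_univ, Fintype.card_fin, nsmul_eq_mul, ← mul_assoc]
        field_simp
      -- Step 3 : ∫ L as iterated integral
      have hlammeas : Measurable fun q : X × (Fin M → X) =>
          Real.log ((1 / (M : ℝ)) * ∑ m, Real.exp ((inner ℝ (f q.1) (f (q.2 m)) : ℝ))) :=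
        Real.measurable_log.comp ((Finset.measurable_sum Finset.univ fun m _ =>
          Real.measurable_exp.comp ((hf.comp measurable_fst).inner
            (hf.comp ((measurable_pi_apply m).comp measurable_snd)))).const_mul _)
      have hlamint : Integrable (fun q : X × (Fin M → X) =>
          Real.log ((1 / (M : ℝ)) * ∑ m, Real.exp ((inner ℝ (f q.1) (f (q.2 m)) : ℝ))))
          (μ.prod πM) :=
        bdd_integrable _ hlammeas.aestronglyMeasurable (C := B * B) fun q => hlogavg q.1 q.2
      have hLval : (∫ p, L p ∂P) = ∫ x, (∫ y : Fin M → X,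
          Real.log ((1 / (M : ℝ)) * ∑ m, Real.exp ((inner ℝ (f x) (f (y m)) : ℝ))) ∂πM) ∂μ := by
        have hψ : Measurable fun p : X × (Fin M → X) × (Fin K → X) => (p.1, p.2.1) :=
          measurable_fst.prodMk (measurable_fst.comp measurable_snd)
        have hmapL : Measure.map (fun p : X × (Fin M → X) × (Fin K → X) => (p.1, p.2.1)) P
            = μ.prod πM := by
          have h1 : (fun p : X × (Fin M → X) × (Fin K → X) => (p.1, p.2.1))
              = Prod.map id (Prod.fst : (Fin M → X) × (Fin K → X) → Fin M → X) := rfl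
          rw [hP, h1, ← Measure.map_prod_map _ _ measurable_id measurable_fst, Measure.map_id,
            Measure.map_fst_prod, measure_univ, one_smul]
        have h2 : (∫ p, L p ∂P) = ∫ q : X × (Fin M → X),
            Real.log ((1 / (M : ℝ)) * ∑ m, Real.exp ((inner ℝ (f q.1) (f (q.2 m)) : ℝ)))
            ∂(μ.prod πM) := by
          rw [← hmapL, integral_map hψ.aemeasurable hlammeas.aestronglyMeasurable]
        rw [h2, integral_prod _ hlamint]
      -- Step 4 : assemble
      have hLMmeas : Measurable fun x => ∫ y : Fin M → X,
          Real.log ((1 / (M : ℝ)) * ∑ m, Real.exp ((inner ℝ (f x) (f (y m)) : ℝ))) ∂πM :=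
        (hlammeas.stronglyMeasurable.integral_prod_right').measurable
      have hLMb : ∀ x, |∫ y : Fin M → X,
          Real.log ((1 / (M : ℝ)) * ∑ m, Real.exp ((inner ℝ (f x) (f (y m)) : ℝ))) ∂πM| ≤ B * B := by
        intro x
        refine abs_integral_le_of_bound πM ?_ fun y => hlogavg x y
        exact (Real.measurable_log.comp ((Finset.measurable_sum Finset.univ fun m _ =>
          Real.measurable_exp.comp ((measurable_const.inner hf).comp
            (measurable_pi_apply m))).const_mul _)).aestronglyMeasurable
      have hLMint : Integrable (fun x => ∫ y : Fin M → X,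
          Real.log ((1 / (M : ℝ)) * ∑ m, Real.exp ((inner ℝ (f x) (f (y m)) : ℝ))) ∂πM) μ :=
        bdd_integrable μ hLMmeas.aestronglyMeasurable hLMb
      have hlogmint : Integrable (fun x => Real.log (mfun x)) μ :=
        bdd_integrable μ (Real.measurable_log.comp hmmeas).aestronglyMeasurable hlogm
      have hdiff : J M K - (T1 - T2) = ∫ x, (Real.log (mfun x) - ∫ y : Fin M → X,
          Real.log ((1 / (M : ℝ)) * ∑ m, Real.exp ((inner ℝ (f x) (f (y m)) : ℝ))) ∂πM) ∂μ := by
        rw [hJeq, hAval, hLval, integral_sub hlogmint hLMint, ← hT2def]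
        ring
      rw [hdiff]
      refine abs_integral_le_of_bound μ ((Real.measurable_log.comp hmmeas).sub
        hLMmeas).aestronglyMeasurable fun x => ?_
      rw [Pi.sub_apply, Function.comp_apply, abs_sub_comm]
      have hc := hcore x 0 le_rfl hCpos.le M hM
      simpa using hc
    have hb0 : Tendsto (fun M : ℕ => 2 * (C / ε) / Real.sqrt M) atTop (nhds 0) := by
      apply Tendsto.div_atTop tendsto_const_nhds
      have hsqrtT : Tendsto Real.sqrt atTop atTop :=
        tendsto_atTop_atTop_of_monotone (fun a b hab => Real.sqrt_le_sqrt hab)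
          (fun b => ⟨b ^ 2, by rw [Real.sqrt_sq_eq_abs]; exact le_abs_self b⟩)
      exact hsqrtT.comp tendsto_natCast_atTop_atTop
    show Tendsto (fun M : ℕ => J M K) atTop (nhds (T1 - T2))
    rw [tendsto_iff_dist_tendsto_zero]
    refine squeeze_zero' (Eventually.of_forall fun M => dist_nonneg) ?_ hb0
    filter_upwards [eventually_ge_atTop 1] with M hM
    rw [Real.dist_eq]
    exact hmain M hM
  · -- Part 2 : InfoNCE limit
    show Tendsto (fun K : ℕ => I K - Real.log K) atTop (nhds (-(T1 - T2)))
    have hD : ∀ (u lo hi : ℝ), lo ≤ u → u ≤ hi → |u| ≤ |lo| + |hi| := by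
      intro u lo hi h1 h2
      rw [abs_le]
      constructor
      · have := neg_abs_le lo
        have := abs_nonneg hi
        linarith
      · have := le_abs_self hi
        have := abs_nonneg lo
        linarith
    have hmain : ∀ K : ℕ, 1 ≤ K →
        |(I K - Real.log K) - (T2 - T1)| ≤ 2 * (C / ε) / Real.sqrt K := by
      intro K hK
      have hKne : (K : ℝ) ≠ 0 := Nat.cast_ne_zero.mpr (by omega)
      have hK1 : (1 : ℝ) ≤ (K : ℝ) := by exact_mod_cast hK
      set πK : Measure (Fin K → X) := Measure.pi fun _ : Fin K => μ with hπK
      set Q : Measure (X × X × (Fin K → X)) := μ.prod (μ.prod πK) with hQ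
      set G : X × X × (Fin K → X) → ℝ := fun p =>
        Real.log (Real.exp ((inner ℝ (f p.1) (f p.2.1) : ℝ)) / K
          + (1 / (K : ℝ)) * ∑ k, Real.exp ((inner ℝ (f p.1) (f (p.2.2 k)) : ℝ))) with hG
      set Af : X × X × (Fin K → X) → ℝ := fun p => (inner ℝ (f p.1) (f p.2.1) : ℝ) with hAf
      have havg : ∀ p : X × X × (Fin K → X),
          ε ≤ (1 / (K : ℝ)) * ∑ k, Real.exp ((inner ℝ (f p.1) (f (p.2.2 k)) : ℝ)) ∧
          (1 / (K : ℝ)) * ∑ k, Real.exp ((inner ℝ (f p.1) (f (p.2.2 k)) : ℝ)) ≤ C := fun p =>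
        ⟨le_avg_of_le hK fun k => hglo p.1 (p.2.2 k),
         avg_le_of_le hK fun k => hghi p.1 (p.2.2 k)⟩
      have hsdiv : ∀ p : X × X × (Fin K → X),
          0 ≤ Real.exp ((inner ℝ (f p.1) (f p.2.1) : ℝ)) / K ∧
          Real.exp ((inner ℝ (f p.1) (f p.2.1) : ℝ)) / K ≤ C := by
        intro p
        refine ⟨by positivity, ?_⟩
        calc Real.exp ((inner ℝ (f p.1) (f p.2.1) : ℝ)) / K
            ≤ Real.exp ((inner ℝ (f p.1) (f p.2.1) : ℝ)) :=
              div_le_self (Real.exp_pos _).le hK1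
          _ ≤ C := hghi _ _
      have hGb : ∀ p, |G p| ≤ B * B + (Real.log 2 + B * B) := by
        intro p
        have h1 := (havg p).1
        have h2 := (havg p).2
        have h3 := (hsdiv p).1
        have h4 := (hsdiv p).2
        have hlog2 : 0 ≤ Real.log 2 := Real.log_nonneg one_le_two
        simp only [hG]
        rw [abs_le]
        constructor
        · calc -(B * B + (Real.log 2 + B * B)) ≤ -(B * B) := by nlinarith [mul_self_nonneg B]
            _ = Real.log ε := (Real.log_exp _).symm
            _ ≤ _ := Real.log_le_log hεpos (by linarith)
        · calc Real.log _ ≤ Real.log (2 * C) :=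
              Real.log_le_log (by linarith) (by linarith)
            _ = Real.log 2 + Real.log C := Real.log_mul two_ne_zero hCpos.ne'
            _ = B * B + (Real.log 2 + B * B) - (B * B) := by rw [hCdef, Real.log_exp]; ring
            _ ≤ B * B + (Real.log 2 + B * B) := by nlinarith [mul_self_nonneg B]
      have hGmeas : Measurable G := by
        apply Real.measurable_log.comp
        apply Measurable.add
        · exact (Real.measurable_exp.comp ((hf.comp measurable_fst).inner
            (hf.comp (measurable_fst.comp measurable_snd)))).div_const _
        · exact (Finset.measurable_sum Finset.univ fun k _ =>
            Real.measurable_exp.comp ((hf.comp measurable_fst).inner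
              (hf.comp ((measurable_pi_apply k).comp
                (measurable_snd.comp measurable_snd))))).const_mul _
      have hAfmeas : Measurable Af :=
        (hf.comp measurable_fst).inner (hf.comp (measurable_fst.comp measurable_snd))
      have hGint : Integrable G Q := bdd_integrable Q hGmeas.aestronglyMeasurable hGb
      have hAfint : Integrable Af Q :=
        bdd_integrable Q hAfmeas.aestronglyMeasurable (C := B * B) fun p => hip _ _
      -- Step 1 : rewrite I K
      have hIeq : I K - Real.log K = (∫ p, G p ∂Q) - ∫ p, Af p ∂Q := by
        have h1 : I K = ∫ p, (G p + Real.log K - Af p) ∂Q := by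
          rw [hI K]
          refine integral_congr_ae (ae_of_all _ fun p => ?_)
          beta_reduce
          have hTpos : 0 < Real.exp ((inner ℝ (f p.1) (f p.2.1) : ℝ))
              + ∑ k, Real.exp ((inner ℝ (f p.1) (f (p.2.2 k)) : ℝ)) := by
            have hS : 0 ≤ ∑ k, Real.exp ((inner ℝ (f p.1) (f (p.2.2 k)) : ℝ)) :=
              Finset.sum_nonneg fun k _ => (Real.exp_pos _).le
            have := Real.exp_pos ((inner ℝ (f p.1) (f p.2.1) : ℝ))
            linarith
          simp only [hG, hAf]
          rw [Real.log_div (Real.exp_ne_zero _) hTpos.ne', Real.log_exp, neg_sub]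
          have harg : Real.exp ((inner ℝ (f p.1) (f p.2.1) : ℝ)) / K
              + (1 / (K : ℝ)) * ∑ k, Real.exp ((inner ℝ (f p.1) (f (p.2.2 k)) : ℝ))
              = (Real.exp ((inner ℝ (f p.1) (f p.2.1) : ℝ))
                + ∑ k, Real.exp ((inner ℝ (f p.1) (f (p.2.2 k)) : ℝ))) / K := by
            rw [one_div, inv_mul_eq_div, ← add_div]
          rw [harg, Real.log_div hTpos.ne' hKne]
          ring
        have h2 : ∫ p, (G p + Real.log K - Af p) ∂Q
            = (∫ p, (G p + Real.log K) ∂Q) - ∫ p, Af p ∂Q :=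
          integral_sub (hGint.add (integrable_const _)) hAfint
        have h3 : ∫ p, (G p + Real.log K) ∂Q = (∫ p, G p ∂Q) + Real.log K := by
          rw [integral_add hGint (integrable_const _), integral_const]
          simp
        rw [h1, h2, h3]
        ring
      -- Step 2 : ∫ Af = T1
      have hAfval : (∫ p, Af p ∂Q) = T1 := by
        have hψ : Measurable fun p : X × X × (Fin K → X) => (p.1, p.2.1) :=
          measurable_fst.prodMk (measurable_fst.comp measurable_snd)
        have hmap : Measure.map (fun p : X × X × (Fin K → X) => (p.1, p.2.1)) Q
            = μ.prod μ := by
          have h1 : (fun p : X × X × (Fin K → X) => (p.1, p.2.1))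
              = Prod.map id (Prod.fst : X × (Fin K → X) → X) := rfl
          rw [hQ, h1, ← Measure.map_prod_map _ _ measurable_id measurable_fst, Measure.map_id,
            Measure.map_fst_prod, measure_univ, one_smul]
        have hint2 : Integrable (fun q : X × X => (inner ℝ (f q.1) (f q.2) : ℝ)) (μ.prod μ) :=
          bdd_integrable _ hinner2.aestronglyMeasurable (C := B * B) fun q => hip _ _
        have h2 : (∫ p, Af p ∂Q)
            = ∫ q : X × X, (inner ℝ (f q.1) (f q.2) : ℝ) ∂(μ.prod μ) := by
          rw [← hmap, integral_map hψ.aemeasurable hinner2.aestronglyMeasurable]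
        rw [h2, integral_prod _ hint2, hT1def]
      -- Step 3 : ∫ G as iterated integral
      have hFmeas : Measurable fun q : (X × X) × (Fin K → X) =>
          Real.log (Real.exp ((inner ℝ (f q.1.1) (f q.1.2) : ℝ)) / K
            + (1 / (K : ℝ)) * ∑ k, Real.exp ((inner ℝ (f q.1.1) (f (q.2 k)) : ℝ))) := by
        apply Real.measurable_log.comp
        apply Measurable.add
        · exact (Real.measurable_exp.comp (((hf.comp measurable_fst).inner
            (hf.comp measurable_snd)).comp measurable_fst)).div_const _
        · exact (Finset.measurable_sum Finset.univ fun k _ =>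
            Real.measurable_exp.comp ((hf.comp (measurable_fst.comp measurable_fst)).inner
              (hf.comp ((measurable_pi_apply k).comp measurable_snd)))).const_mul _
      have hHmeas : StronglyMeasurable fun q : X × X =>
          ∫ z : Fin K → X, Real.log (Real.exp ((inner ℝ (f q.1) (f q.2) : ℝ)) / K
            + (1 / (K : ℝ)) * ∑ k, Real.exp ((inner ℝ (f q.1) (f (z k)) : ℝ))) ∂πK :=
        hFmeas.stronglyMeasurable.integral_prod_right'
      set Φ : X → ℝ := fun x => ∫ x',
          (∫ z : Fin K → X, Real.log (Real.exp ((inner ℝ (f x) (f x') : ℝ)) / K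
            + (1 / (K : ℝ)) * ∑ k, Real.exp ((inner ℝ (f x) (f (z k)) : ℝ))) ∂πK) ∂μ with hΦ
      have hGval : (∫ p, G p ∂Q) = ∫ x, Φ x ∂μ := by
        rw [hQ, integral_prod _ hGint]
        refine integral_congr_ae (ae_of_all _ fun x => ?_)
        beta_reduce
        have hint3 : Integrable (fun w : X × (Fin K → X) => G (x, w)) (μ.prod πK) := by
          refine bdd_integrable _ ?_ (C := B * B + (Real.log 2 + B * B))
            (fun w => hGb (x, w))
          exact (hGmeas.comp (measurable_const.prodMk measurable_id)).aestronglyMeasurable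
        rw [show (fun w : X × (Fin K → X) => G (x, w))
            = fun w : X × (Fin K → X) => Real.log (Real.exp ((inner ℝ (f x) (f w.1) : ℝ)) / K
              + (1 / (K : ℝ)) * ∑ k, Real.exp ((inner ℝ (f x) (f (w.2 k)) : ℝ))) from rfl,
          integral_prod _ hint3, hΦ]
      -- Step 4 : pointwise bound via core
      have hHb : ∀ x x' : X,
          |(∫ z : Fin K → X, Real.log (Real.exp ((inner ℝ (f x) (f x') : ℝ)) / K
            + (1 / (K : ℝ)) * ∑ k, Real.exp ((inner ℝ (f x) (f (z k)) : ℝ))) ∂πK)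
            - Real.log (mfun x)| ≤ 2 * (C / ε) / Real.sqrt K := fun x x' =>
        hcore x (Real.exp ((inner ℝ (f x) (f x') : ℝ))) (Real.exp_pos _).le (hghi x x') K hK
      -- Step 5 : assemble
      have hHb2 : ∀ x x' : X,
          |(∫ z : Fin K → X, Real.log (Real.exp ((inner ℝ (f x) (f x') : ℝ)) / K
            + (1 / (K : ℝ)) * ∑ k, Real.exp ((inner ℝ (f x) (f (z k)) : ℝ))) ∂πK)|
            ≤ |Real.log (mfun x)| + 2 * (C / ε) / Real.sqrt K := by
        intro x x'
        have h1 := hHb x x'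
        have h2 := abs_sub_abs_le_abs_sub
          (∫ z : Fin K → X, Real.log (Real.exp ((inner ℝ (f x) (f x') : ℝ)) / K
            + (1 / (K : ℝ)) * ∑ k, Real.exp ((inner ℝ (f x) (f (z k)) : ℝ))) ∂πK)
          (Real.log (mfun x))
        linarith
      have hΦmeas : StronglyMeasurable Φ := hHmeas.integral_prod_right'
      have hΦb : ∀ x, |Φ x| ≤ B * B + 2 * (C / ε) / Real.sqrt K := by
        intro x
        refine abs_integral_le_of_bound μ ?_ fun x' => ?_
        · exact (hHmeas.comp_measurable measurable_prodMk_left).aestronglyMeasurable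
        · exact (hHb2 x x').trans (by linarith [hlogm x])
      have hΦint : Integrable Φ μ :=
        bdd_integrable μ hΦmeas.aestronglyMeasurable hΦb
      have hlogmint : Integrable (fun x => Real.log (mfun x)) μ :=
        bdd_integrable μ (Real.measurable_log.comp hmmeas).aestronglyMeasurable hlogm
      have hdiff : (I K - Real.log K) - (T2 - T1)
          = ∫ x, (Φ x - Real.log (mfun x)) ∂μ := by
        rw [hIeq, hAfval, hGval, integral_sub hΦint hlogmint, ← hT2def]
        ring
      rw [hdiff]
      refine abs_integral_le_of_bound μ (hΦmeas.sub
        (Real.measurable_log.comp hmmeas).stronglyMeasurable).aestronglyMeasurable fun x => ?_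
      show |Φ x - Real.log (mfun x)| ≤ 2 * (C / ε) / Real.sqrt K
      have hΦdiff : Φ x - Real.log (mfun x)
          = ∫ x', ((∫ z : Fin K → X, Real.log (Real.exp ((inner ℝ (f x) (f x') : ℝ)) / K
            + (1 / (K : ℝ)) * ∑ k, Real.exp ((inner ℝ (f x) (f (z k)) : ℝ))) ∂πK)
            - Real.log (mfun x)) ∂μ := by
        rw [hΦ]
        beta_reduce
        rw [integral_sub ?_ (integrable_const _), integral_const]
        · simp
        · refine bdd_integrable μ
            (hHmeas.comp_measurable measurable_prodMk_left).aestronglyMeasurable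
            (C := |Real.log (mfun x)| + 2 * (C / ε) / Real.sqrt K) fun x' => hHb2 x x'
      rw [hΦdiff]
      refine abs_integral_le_of_bound μ ?_ fun x' => hHb x x'
      exact ((hHmeas.comp_measurable measurable_prodMk_left).sub
        stronglyMeasurable_const).aestronglyMeasurable
    have hb0 : Tendsto (fun K : ℕ => 2 * (C / ε) / Real.sqrt K) atTop (nhds 0) := by
      apply Tendsto.div_atTop tendsto_const_nhds
      have hsqrtT : Tendsto Real.sqrt atTop atTop :=
        tendsto_atTop_atTop_of_monotone (fun a b hab => Real.sqrt_le_sqrt hab)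
          (fun b => ⟨b ^ 2, by rw [Real.sqrt_sq_eq_abs]; exact le_abs_self b⟩)
      exact hsqrtT.comp tendsto_natCast_atTop_atTop
    rw [neg_sub]
    rw [tendsto_iff_dist_tendsto_zero]
    refine squeeze_zero' (Eventually.of_forall fun K => dist_nonneg) ?_ hb0
    filter_upwards [eventually_ge_atTop 1] with K hK
    rw [Real.dist_eq]
    exact hmain K hK
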